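/- Let G be a graph with m edges, minimum degree δ > 0, and largest normalized Laplacian eigenvalue μ. Then α(G) ≤ 2m(μ − 1)/(μδ). -/

import Mathlib

open scoped Classical
open Matrix Finset

/-- The independence number of a finite simple graph. -/
noncomputable def indepNum {V : Type*} [Fintype V] (G : SimpleGraph V) : ℕ :=
  sSup {k | ∃ S : Finset V, (∀ u ∈ S, ∀ v ∈ S, u ≠ v → ¬ G.Adj u v) ∧ S.card = k}

lemma rayleigh_aux {n : ℕ} (M : Matrix (Fin n) (Fin n) ℝ) (hsymm : M.IsHermitian) (μ : ℝ)
    (hmax : ∀ (ν : ℝ) (v : Fin n → ℝ), v ≠ 0 → M.mulVec v = ν • v → ν ≤ μ)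
    (x : Fin n → ℝ) :
    ∑ i, M.mulVec x i * x i ≤ μ * ∑ i, x i * x i := by
  rcases Nat.eq_zero_or_pos n with hn | hn
  · subst hn; simp
  haveI : Nonempty (Fin n) := ⟨⟨0, hn⟩⟩
  haveI : Nontrivial (EuclideanSpace ℝ (Fin n)) := by
    refine ⟨(WithLp.equiv 2 _).symm 0, (WithLp.equiv 2 _).symm (fun _ => 1), ?_⟩
    intro h
    have := congrFun ((WithLp.equiv 2 (Fin n → ℝ)).symm.injective h) ⟨0, hn⟩
    simp at this
  set T : EuclideanSpace ℝ (Fin n) →ₗ[ℝ] EuclideanSpace ℝ (Fin n) := Matrix.toEuclideanLin M with hT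
  have hTsymm : T.IsSymmetric := Matrix.isHermitian_iff_isSymmetric.mp hsymm
  set R : ℝ := ⨆ y : { y : EuclideanSpace ℝ (Fin n) // y ≠ 0 },
      RCLike.re (inner ℝ (T y) (y : EuclideanSpace ℝ (Fin n)) : ℝ) / ‖(y : EuclideanSpace ℝ (Fin n))‖ ^ 2 with hR
  have hev := hTsymm.hasEigenvalue_iSup_of_finiteDimensional
  obtain ⟨v, hv⟩ := hev.exists_hasEigenvector
  have hveq : T v = R • v := Module.End.mem_eigenspace_iff.mp hv.1
  have hRμ : R ≤ μ := by
    refine hmax R (WithLp.equiv 2 (Fin n → ℝ) v) ?_ ?_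
    · intro h
      exact hv.2 ((WithLp.equiv 2 (Fin n → ℝ)).injective (by simpa using h))
    · have := congrArg (WithLp.equiv 2 (Fin n → ℝ)) hveq
      simpa [hT, Matrix.ofLp_toEuclideanLin_apply] using this
  have hbdd : BddAbove (Set.range fun y : { y : EuclideanSpace ℝ (Fin n) // y ≠ 0 } =>
      RCLike.re (inner ℝ (T y) (y : EuclideanSpace ℝ (Fin n)) : ℝ) / ‖(y : EuclideanSpace ℝ (Fin n))‖ ^ 2) := by
    refine ⟨‖LinearMap.toContinuousLinearMap T‖, ?_⟩
    rintro _ ⟨y, rfl⟩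
    have hy : (0:ℝ) < ‖(y : EuclideanSpace ℝ (Fin n))‖ := norm_pos_iff.mpr y.2
    rw [div_le_iff₀ (by positivity)]
    simp only [RCLike.re_to_real]
    calc (inner ℝ (T y) (y : EuclideanSpace ℝ (Fin n)) : ℝ)
        ≤ ‖T y‖ * ‖(y : EuclideanSpace ℝ (Fin n))‖ := real_inner_le_norm _ _
      _ ≤ (‖LinearMap.toContinuousLinearMap T‖ * ‖(y : EuclideanSpace ℝ (Fin n))‖) * ‖(y : EuclideanSpace ℝ (Fin n))‖ := by
          gcongr
          exact (LinearMap.toContinuousLinearMap T).le_opNorm _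
      _ = ‖LinearMap.toContinuousLinearMap T‖ * ‖(y : EuclideanSpace ℝ (Fin n))‖ ^ 2 := by ring
  by_cases hx0 : x = 0
  · subst hx0; simp
  set x' : EuclideanSpace ℝ (Fin n) := (WithLp.equiv 2 (Fin n → ℝ)).symm x with hx'
  have hx'0 : x' ≠ 0 := by
    intro h; exact hx0 (by simpa [hx'] using congrArg (WithLp.equiv 2 (Fin n → ℝ)) h)
  have hle : RCLike.re (inner ℝ (T x') x' : ℝ) / ‖x'‖ ^ 2 ≤ R :=
    le_ciSup hbdd (⟨x', hx'0⟩ : { y : EuclideanSpace ℝ (Fin n) // y ≠ 0 })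
  have hnorm : ‖x'‖ ^ 2 = ∑ i, x i * x i := by
    rw [← real_inner_self_eq_norm_sq]
    simp only [PiLp.inner_apply, hx', RCLike.inner_apply, conj_trivial, WithLp.equiv_symm_apply, WithLp.ofLp_toLp]
  have hinner : RCLike.re (inner ℝ (T x') x' : ℝ) = ∑ i, M.mulVec x i * x i := by
    simp [PiLp.inner_apply, hT, RCLike.inner_apply, hx', Matrix.toEuclideanLin_apply_piLp_toLp,
      WithLp.equiv_symm_apply, WithLp.ofLp_toLp, mul_comm]
  have hpos : (0:ℝ) < ‖x'‖ ^ 2 := by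
    have : (0:ℝ) < ‖x'‖ := norm_pos_iff.mpr hx'0
    positivity
  have := (div_le_iff₀ hpos).mp (hle.trans hRμ)
  rw [hinner] at this
  calc ∑ i, M.mulVec x i * x i ≤ μ * ‖x'‖^2 := this
    _ = μ * ∑ i, x i * x i := by rw [hnorm]

/-- Corollary 6.4 (Harant–Richter): for a graph with m edges, minimum degree δ > 0 and
largest normalized Laplacian eigenvalue μ, α(G) ≤ 2m(μ − 1)/(μδ). -/
theorem stmt13 (n : ℕ) (G : SimpleGraph (Fin n)) (hδ : 0 < G.minDegree)
    (L : Matrix (Fin n) (Fin n) ℝ)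
    (hLdef : L = Matrix.of fun i j =>
      if i = j then (1 : ℝ)
      else if G.Adj i j then -(1 / Real.sqrt ((G.degree i : ℝ) * (G.degree j : ℝ)))
      else 0)
    (μ : ℝ)
    (hμev : ∃ v : Fin n → ℝ, v ≠ 0 ∧ L.mulVec v = μ • v)
    (hμmax : ∀ (ν : ℝ) (v : Fin n → ℝ), v ≠ 0 → L.mulVec v = ν • v → ν ≤ μ) :
    (indepNum G : ℝ) ≤
      2 * (G.edgeFinset.card : ℝ) * (μ - 1) / (μ * (G.minDegree : ℝ)) := by
  classical
  -- the vertex type is nonempty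
  have hne : Nonempty (Fin n) := by
    by_contra h
    rw [not_nonempty_iff] at h
    have : G.minDegree = 0 := by
      simp [SimpleGraph.minDegree, Finset.univ_eq_empty]
    omega
  -- a maximum independent set S
  have hAbdd : BddAbove {k | ∃ S : Finset (Fin n),
      (∀ u ∈ S, ∀ v ∈ S, u ≠ v → ¬ G.Adj u v) ∧ S.card = k} := by
    refine ⟨n, ?_⟩
    rintro k ⟨S, -, rfl⟩
    simpa using S.card_le_univ
  have hmem : indepNum G ∈ {k | ∃ S : Finset (Fin n),
      (∀ u ∈ S, ∀ v ∈ S, u ≠ v → ¬ G.Adj u v) ∧ S.card = k} :=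
    Nat.sSup_mem ⟨0, ⟨∅, by simp⟩⟩ hAbdd
  obtain ⟨S, hSind, hScard⟩ := hmem
  have hα1 : 1 ≤ indepNum G := by
    obtain ⟨v⟩ := hne
    exact le_csSup hAbdd ⟨{v}, by simp, by simp⟩
  have hSne : S.Nonempty := by
    rw [← Finset.card_pos, hScard]; omega
  -- degrees
  have hdpos : ∀ i, 0 < G.degree i := fun i => lt_of_lt_of_le hδ (G.minDegree_le_degree i)
  set d : Fin n → ℝ := fun i => (G.degree i : ℝ) with hdd
  have hd : ∀ i, (0:ℝ) < d i := by
    intro i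
    simp only [hdd]
    exact_mod_cast hdpos i
  set D : ℝ := ∑ i, d i with hD
  have hD2m : D = 2 * (G.edgeFinset.card : ℝ) := by
    have h := G.sum_degrees_eq_twice_card_edges
    have h2 : ((∑ v, G.degree v : ℕ) : ℝ) = ((2 * G.edgeFinset.card : ℕ) : ℝ) := by
      exact_mod_cast congrArg (Nat.cast : ℕ → ℝ) h
    simpa [hD, hdd, Nat.cast_sum] using h2
  set s : ℝ := ∑ i ∈ S, d i with hs
  have hspos : (0:ℝ) < s := Finset.sum_pos (fun i _ => hd i) hSne
  have hsD : s ≤ D :=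
    Finset.sum_le_sum_of_subset_of_nonneg (Finset.subset_univ S) (fun i _ _ => (hd i).le)
  have hDpos : (0:ℝ) < D := lt_of_lt_of_le hspos hsD
  -- independence: neighbors of S avoid S
  have hnotS : ∀ i ∈ S, ∀ j ∈ G.neighborFinset i, j ∉ S := by
    intro i hi j hj hjS
    have hadj : G.Adj i j := (SimpleGraph.mem_neighborFinset _ _ _).mp hj
    exact hSind i hi j hjS hadj.ne hadj
  -- swap lemma for double sums over adjacent pairs
  have hswap : ∀ f : Fin n → Fin n → ℝ,
      (∑ i, ∑ j ∈ G.neighborFinset i, f i j) = ∑ j, ∑ i ∈ G.neighborFinset j, f i j := by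
    intro f
    calc ∑ i, ∑ j ∈ G.neighborFinset i, f i j
        = ∑ i, ∑ j, if j ∈ G.neighborFinset i then f i j else 0 := by
          refine Finset.sum_congr rfl fun i _ => ?_
          rw [Finset.sum_ite_mem, Finset.univ_inter]
      _ = ∑ j, ∑ i, if j ∈ G.neighborFinset i then f i j else 0 := Finset.sum_comm
      _ = ∑ j, ∑ i ∈ G.neighborFinset j, f i j := by
          refine Finset.sum_congr rfl fun j _ => ?_
          rw [← Finset.univ_inter (G.neighborFinset j), ← Finset.sum_ite_mem]
          refine Finset.sum_congr rfl fun i _ => ?_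
          simp only [SimpleGraph.mem_neighborFinset]
          rw [SimpleGraph.adj_comm]
  -- the test vector
  set c : ℝ := s / D with hc
  set e : Fin n → ℝ := fun i => if i ∈ S then (1:ℝ) else 0 with he
  set y : Fin n → ℝ := fun i => e i - c with hy
  set x : Fin n → ℝ := fun i => Real.sqrt (d i) * y i with hx
  -- L is symmetric
  have hherm : L.IsHermitian := by
    rw [hLdef]
    ext i j
    simp only [Matrix.conjTranspose_apply, Matrix.of_apply, star_trivial]
    by_cases h : i = j
    · subst h; simp
    · have h' : ¬ j = i := fun hh => h hh.symm
      by_cases ha : G.Adj i j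
      · have ha' : G.Adj j i := ha.symm
        simp [h, h', ha, ha', mul_comm]
      · have ha' : ¬ G.Adj j i := fun hh => ha hh.symm
        simp [h, h', ha, ha']
  -- mulVec formula
  have hmul : ∀ i, L.mulVec x i
      = x i - ∑ j ∈ G.neighborFinset i, (1 / Real.sqrt (d i * d j)) * x j := by
    intro i
    rw [hLdef]
    simp only [Matrix.mulVec, dotProduct, Matrix.of_apply]
    have hterm : ∀ j, (if i = j then (1:ℝ)
          else if G.Adj i j then -(1 / Real.sqrt (d i * d j)) else 0) * x j
        = (if i = j then x j else 0)
          + (if G.Adj i j then -((1 / Real.sqrt (d i * d j)) * x j) else 0) := by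
      intro j
      by_cases h1 : i = j
      · subst h1
        rw [if_pos rfl, if_pos rfl, if_neg (G.irrefl : ¬ G.Adj i i), one_mul, add_zero]
      · by_cases h2 : G.Adj i j
        · simp only [if_neg h1, if_pos h2]; ring
        · simp only [if_neg h1, if_neg h2]; ring
    rw [Finset.sum_congr rfl fun j _ => hterm j, Finset.sum_add_distrib]
    congr 1
    · simp
    · calc ∑ j, (if G.Adj i j then -((1 / Real.sqrt (d i * d j)) * x j) else 0)
          = ∑ j, -(if j ∈ G.neighborFinset i then (1 / Real.sqrt (d i * d j)) * x j else 0) := by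
            refine Finset.sum_congr rfl fun j _ => ?_
            by_cases hA : G.Adj i j
            · rw [if_pos hA, if_pos ((SimpleGraph.mem_neighborFinset _ _ _).mpr hA)]
            · rw [if_neg hA, if_neg (fun h => hA ((SimpleGraph.mem_neighborFinset _ _ _).mp h)),
                neg_zero]
        _ = -∑ j, (if j ∈ G.neighborFinset i then (1 / Real.sqrt (d i * d j)) * x j else 0) := by
            rw [Finset.sum_neg_distrib]
        _ = -∑ j ∈ G.neighborFinset i, (1 / Real.sqrt (d i * d j)) * x j := by
            rw [Finset.sum_ite_mem, Finset.univ_inter]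
  -- x i * x i = d i * (y i * y i)
  have hxsq : ∀ i, x i * x i = d i * (y i * y i) := by
    intro i
    simp only [hx]
    rw [show Real.sqrt (d i) * y i * (Real.sqrt (d i) * y i)
        = Real.sqrt (d i) * Real.sqrt (d i) * (y i * y i) from by ring,
      Real.mul_self_sqrt (hd i).le]
  -- the quadratic form
  have hQ : ∑ i, L.mulVec x i * x i
      = ∑ i, d i * (y i * y i) - ∑ i, ∑ j ∈ G.neighborFinset i, y i * y j := by
    rw [← Finset.sum_sub_distrib]
    refine Finset.sum_congr rfl fun i _ => ?_
    rw [hmul i, sub_mul, Finset.sum_mul, hxsq i]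
    congr 1
    refine Finset.sum_congr rfl fun j _ => ?_
    have hsqrt : Real.sqrt (d i * d j) = Real.sqrt (d i) * Real.sqrt (d j) :=
      Real.sqrt_mul (hd i).le _
    have hsi : Real.sqrt (d i) ≠ 0 := ne_of_gt (Real.sqrt_pos.mpr (hd i))
    have hsj : Real.sqrt (d j) ≠ 0 := ne_of_gt (Real.sqrt_pos.mpr (hd j))
    rw [hsqrt]
    simp only [hx]
    field_simp
  -- sums over S
  have hdsum : ∑ i, d i * e i = s := by
    simp only [he, mul_ite, mul_one, mul_zero]
    rw [Finset.sum_ite_mem, Finset.univ_inter]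
  have hdeg_card : ∀ i, ((G.neighborFinset i).card : ℝ) = d i := by
    intro i
    rw [SimpleGraph.card_neighborFinset_eq_degree]
  -- the four pieces of the cross term
  have hA : ∑ i, ∑ j ∈ G.neighborFinset i, e i * e j = 0 := by
    refine Finset.sum_eq_zero fun i _ => ?_
    by_cases hi : i ∈ S
    · refine Finset.sum_eq_zero fun j hj => ?_
      have : j ∉ S := hnotS i hi j hj
      simp [he, this]
    · simp [he, hi]
  have hB : ∑ i, ∑ j ∈ G.neighborFinset i, e i = s := by
    have : ∀ i, ∑ j ∈ G.neighborFinset i, e i = d i * e i := by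
      intro i
      rw [Finset.sum_const, nsmul_eq_mul, hdeg_card]
    rw [Finset.sum_congr rfl fun i _ => this i, hdsum]
  have hC : ∑ i, ∑ j ∈ G.neighborFinset i, e j = s := by
    rw [hswap (fun _ j => e j)]
    have : ∀ j, ∑ i ∈ G.neighborFinset j, e j = d j * e j := by
      intro j
      rw [Finset.sum_const, nsmul_eq_mul, hdeg_card]
    rw [Finset.sum_congr rfl fun j _ => this j, hdsum]
  have hDD : ∑ i, ∑ j ∈ G.neighborFinset i, (c*c) = c * c * D := by
    have : ∀ i, ∑ j ∈ G.neighborFinset i, (c*c) = d i * (c*c) := by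
      intro i
      rw [Finset.sum_const, nsmul_eq_mul, hdeg_card]
    rw [Finset.sum_congr rfl fun i _ => this i, hD]
    rw [← Finset.sum_mul]
    ring
  -- cross term value
  have hT2 : ∑ i, ∑ j ∈ G.neighborFinset i, y i * y j = -(c*s) - c*s + c*c*D := by
    have hexp : ∀ i, ∑ j ∈ G.neighborFinset i, y i * y j
        = (∑ j ∈ G.neighborFinset i, e i * e j) - c * (∑ j ∈ G.neighborFinset i, e i)
          - c * (∑ j ∈ G.neighborFinset i, e j) + ∑ j ∈ G.neighborFinset i, (c*c) := by
      intro i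
      rw [Finset.mul_sum, Finset.mul_sum, ← Finset.sum_sub_distrib, ← Finset.sum_sub_distrib,
        ← Finset.sum_add_distrib]
      refine Finset.sum_congr rfl fun j _ => ?_
      simp only [hy]
      ring
    rw [Finset.sum_congr rfl fun i _ => hexp i]
    rw [Finset.sum_add_distrib, Finset.sum_sub_distrib, Finset.sum_sub_distrib,
      ← Finset.mul_sum, ← Finset.mul_sum, hA, hB, hC, hDD]
    ring
  -- diagonal piece value
  have hN : ∑ i, d i * (y i * y i) = s * (1-c)^2 + (D - s) * c^2 := by
    rw [← Finset.sum_sdiff (Finset.subset_univ S)]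
    have h1 : ∑ i ∈ S, d i * (y i * y i) = s * (1-c)^2 := by
      rw [hs, Finset.sum_mul]
      refine Finset.sum_congr rfl fun i hi => ?_
      simp only [hy, he, if_pos hi]
      ring
    have h2 : ∑ i ∈ univ \ S, d i * (y i * y i) = (D - s) * c^2 := by
      have h3 : ∑ i ∈ univ \ S, d i = D - s := by
        have := Finset.sum_sdiff (Finset.subset_univ S) (f := d)
        rw [hD, hs]
        linarith [this]
      rw [← h3, Finset.sum_mul]
      refine Finset.sum_congr rfl fun i hi => ?_
      have hiS : i ∉ S := (Finset.mem_sdiff.mp hi).2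
      simp only [hy, he, if_neg hiS]
      ring
    rw [h1, h2]
    ring
  -- apply the Rayleigh bound
  have hray := rayleigh_aux L hherm μ hμmax x
  have hQs : ∑ i, L.mulVec x i * x i = s := by
    rw [hQ, hN, hT2]
    ring
  have hXN : ∑ i, x i * x i = s * (1-c)^2 + (D - s) * c^2 := by
    rw [Finset.sum_congr rfl fun i _ => hxsq i, hN]
  have key : s ≤ μ * (s * (1-c)^2 + (D - s) * c^2) := by
    calc s = ∑ i, L.mulVec x i * x i := hQs.symm
      _ ≤ μ * ∑ i, x i * x i := hray
      _ = μ * (s * (1-c)^2 + (D - s) * c^2) := by rw [hXN]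
  -- arithmetic endgame
  have hN' : s * (1-c)^2 + (D - s) * c^2 = s * (1 - s/D) := by
    rw [hc]
    field_simp
    ring
  rw [hN'] at key
  have h1 : 1 ≤ μ * (1 - s/D) := by
    have heq : μ * (s * (1 - s/D)) = s * (μ * (1 - s/D)) := by ring
    rw [heq] at key
    exact (le_mul_iff_one_le_right hspos).mp key
  have hfrac : 0 ≤ 1 - s / D := by
    rw [sub_nonneg]
    exact (div_le_one hDpos).mpr hsD
  have hμpos : (0:ℝ) < μ := by
    by_contra hcon
    push_neg at hcon
    have : μ * (1 - s/D) ≤ 0 := mul_nonpos_of_nonpos_of_nonneg hcon hfrac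
    linarith
  have hsdD : s / D * D = s := div_mul_cancel₀ s (ne_of_gt hDpos)
  have hμs : μ * s ≤ D * (μ - 1) := by
    have hexpand : μ * (1 - s/D) = μ - μ * (s/D) := by ring
    have h3 : μ * (s/D) ≤ μ - 1 := by linarith
    have h4 : (μ * (s/D)) * D ≤ (μ - 1) * D := mul_le_mul_of_nonneg_right h3 hDpos.le
    have h5 : (μ * (s/D)) * D = μ * s := by rw [mul_assoc, hsdD]
    linarith [h4, h5]
  have hδR : (0:ℝ) < (G.minDegree : ℝ) := by exact_mod_cast hδ
  have hαs : (indepNum G : ℝ) * (G.minDegree : ℝ) ≤ s := by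
    have hterm : ∀ i ∈ S, (G.minDegree : ℝ) ≤ d i := by
      intro i _
      simp only [hdd]
      exact_mod_cast G.minDegree_le_degree i
    calc (indepNum G : ℝ) * (G.minDegree : ℝ)
        = ∑ _i ∈ S, (G.minDegree : ℝ) := by
          rw [Finset.sum_const, nsmul_eq_mul, hScard]
      _ ≤ ∑ i ∈ S, d i := Finset.sum_le_sum hterm
      _ = s := hs.symm
  rw [← hD2m, le_div_iff₀ (by positivity : (0:ℝ) < μ * (G.minDegree : ℝ))]
  calc (indepNum G : ℝ) * (μ * (G.minDegree : ℝ))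
      = μ * ((indepNum G : ℝ) * (G.minDegree : ℝ)) := by ring
    _ ≤ μ * s := mul_le_mul_of_nonneg_left hαs hμpos.le
    _ ≤ D * (μ - 1) := hμs
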